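/- Let ℓ ≥ 4 and let n_1, n_2, c be nonnegative integers with c ≤ n_1. Then ex(n_1, P_ℓ) + ex(n_2, P_ℓ) < ex(n_1 − c, P_ℓ) + ex(n_2 + c + ℓ, P_ℓ). -/

import Mathlib

open SimpleGraph

/-- The edge `e` of `G` is contained in a copy of `H` inside `G`. -/
def EdgeInCopy {W V : Type*} (H : SimpleGraph W) (G : SimpleGraph V) (e : Sym2 V) : Prop :=
  ∃ f : H →g G, Function.Injective f ∧ ∃ e' ∈ H.edgeSet, e = e'.map f

/-- `G` contains a copy of `H` (a subgraph isomorphic to `H`). -/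
def HasCopy {W V : Type*} (H : SimpleGraph W) (G : SimpleGraph V) : Prop :=
  ∃ f : H →g G, Function.Injective f

/-- The Turán number `ex(n, H)`. -/
noncomputable def exNum {W : Type*} (n : ℕ) (H : SimpleGraph W) : ℕ :=
  sSup {m | ∃ G : SimpleGraph (Fin n), ¬ HasCopy H G ∧ m = G.edgeSet.ncard}

/-- The graph formed by the edges of color `i` of an edge-coloring `c` of `K_n`. -/
def colorGraph {n : ℕ} {κ : Type*} (c : Sym2 (Fin n) → κ) (i : κ) : SimpleGraph (Fin n) where
  Adj x y := x ≠ y ∧ c s(x, y) = i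
  symm := ⟨fun x y => by
    rintro ⟨hxy, hc⟩
    exact ⟨hxy.symm, by rwa [Sym2.eq_swap]⟩⟩
  loopless := ⟨fun x => by simp⟩

/-- The set of NIM-`H` edges of `K_n` under the `k`-edge-coloring `c`. -/
def nimEdges {W : Type*} (n k : ℕ) (H : SimpleGraph W) (c : Sym2 (Fin n) → Fin k) :
    Set (Sym2 (Fin n)) :=
  {e | e ∈ (⊤ : SimpleGraph (Fin n)).edgeSet ∧ ∀ i : Fin k, ¬ EdgeInCopy H (colorGraph c i) e}

/-- `f_k(n, H)`: the maximum number of NIM-`H` edges over all `k`-edge-colorings of `K_n`. -/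
noncomputable def nimNum {W : Type*} (k n : ℕ) (H : SimpleGraph W) : ℕ :=
  sSup {m | ∃ c : Sym2 (Fin n) → Fin k, m = (nimEdges n k H c).ncard}



section EGProof
open List Finset


section Helpers
variable {α : Type*} {R : α → α → Prop} {l : List α}

lemma chain'_rotate_of_cyclic (h : l ≠ []) (hc : IsChain R l)
    (hcyc : R (l.getLast h) (l.head h)) (n : ℕ) : IsChain R (l.rotate n) := by
  have hll : IsChain R (l ++ l) := by
    rw [List.isChain_append]
    refine ⟨hc, hc, fun x hx y hy => ?_⟩
    rw [List.getLast?_eq_getLast h, Option.mem_def, Option.some_inj] at hx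
    rw [List.head?_eq_head h, Option.mem_def, Option.some_inj] at hy
    rw [hx, hy] at hcyc; exact hcyc
  have hm : n % l.length ≤ l.length := (Nat.mod_lt _ (List.length_pos_iff.2 h)).le
  rw [← List.rotate_mod, List.rotate_eq_drop_append_take hm]
  refine hll.infix ⟨l.take (n % l.length), l.drop (n % l.length), ?_⟩
  simp only [List.append_assoc, List.take_append_drop]
  rw [← List.append_assoc, List.take_append_drop]

lemma head_rotate_indexOf [DecidableEq α] {z : α} (hz : z ∈ l)
    (hne : l.rotate (l.idxOf z) ≠ []) : (l.rotate (l.idxOf z)).head hne = z := by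
  have hm : l.idxOf z < l.length := List.idxOf_lt_length_iff.2 hz
  rw [List.head_eq_getElem, List.getElem_rotate]
  simp [Nat.mod_eq_of_lt hm, List.getElem_idxOf hm]

variable {V : Type*} {G : SimpleGraph V}

lemma walkOfChain : ∀ (l : List V) (h : l ≠ []) (_ : l.IsChain G.Adj),
    ∃ p : G.Walk (l.head h) (l.getLast h), p.support = l
  | [], h, _ => absurd rfl h
  | [a], _, _ => ⟨Walk.nil, rfl⟩
  | a :: b :: l, _, hc => by
    obtain ⟨p, hp⟩ := walkOfChain (b :: l) (by simp) hc.tail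
    refine ⟨Walk.cons (by exact hc.rel_head) (p.copy rfl (by simp [List.getLast_cons])), ?_⟩
    simp [Walk.support_copy, hp]
    exact (Walk.support_copy _ _ _).trans hp

end Helpers

section Graphs
variable {V : Type*} [Fintype V] [DecidableEq V]

lemma deg_pos_of_mem_support {G : SimpleGraph V} [DecidableRel G.Adj] {u v : V}
    (p : G.Walk u v) (hl : 1 ≤ p.length) {z : V} (hz : z ∈ p.support) : 0 < G.degree z := by
  have hc := p.isChain_adj_support
  have hlen : p.support.length = p.length + 1 := p.length_support
  rw [List.isChain_iff_getElem] at hc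
  set s := p.support with hs
  have hj : s.idxOf z < s.length := List.idxOf_lt_length_iff.2 hz
  have hzj : s[s.idxOf z] = z := List.getElem_idxOf hj
  rw [G.degree_pos_iff_exists_adj]
  rcases Nat.lt_or_ge (s.idxOf z + 1) s.length with h | h
  · have h2 := hc (s.idxOf z) (by omega)
    rw [hzj] at h2
    exact ⟨_, h2⟩
  · have h1 : 1 ≤ s.idxOf z := by omega
    have h2 := hc (s.idxOf z - 1) (by omega)
    simp only [show s.idxOf z - 1 + 1 = s.idxOf z from by omega, hzj] at h2
    exact ⟨_, h2.symm⟩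

lemma goodS (ℓ : ℕ) (hℓ : 3 ≤ ℓ) (G : SimpleGraph V) [DecidableRel G.Adj]
    (hfree : ∀ (u v : V) (p : G.Walk u v), p.IsPath → p.length + 2 ≤ ℓ)
    (hne : G.edgeFinset.Nonempty) :
    ∃ S : Finset V, S.Nonempty ∧ (∀ v ∈ S, 0 < G.degree v) ∧
      2 * (G.edgeFinset.filter (fun e => ∃ x ∈ S, x ∈ e)).card ≤ (ℓ - 2) * S.card := by
  by_cases hsmall : ∃ v, 0 < G.degree v ∧ 2 * G.degree v ≤ ℓ - 2
  · obtain ⟨v, hv0, hv⟩ := hsmall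
    refine ⟨{v}, ⟨v, Finset.mem_singleton_self v⟩, by simpa using hv0, ?_⟩
    have : G.edgeFinset.filter (fun e => ∃ x ∈ ({v} : Finset V), x ∈ e) = G.incidenceFinset v := by
      ext e
      simp [mem_incidenceFinset, incidenceSet, and_comm, mem_edgeFinset]
    rw [this, card_incidenceFinset_eq_degree]
    simpa using hv
  · push_neg at hsmall
    have hbig : ∀ v, 0 < G.degree v → ℓ - 1 ≤ 2 * G.degree v := by
      intro v hv; have := hsmall v hv; omega
    have hedge : ∃ a b : V, G.Adj a b := by
      obtain ⟨e, he⟩ := hne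
      rw [mem_edgeFinset] at he
      induction e using Sym2.ind with
      | _ c d => exact ⟨c, d, he⟩
    obtain ⟨a, b, hab⟩ := hedge
    set T : Set ℕ := {k | ∃ (c d : V) (p : G.Walk c d), p.IsPath ∧ p.length = k} with hT
    have hT1 : 1 ∈ T := ⟨a, b, Walk.cons hab Walk.nil, by simp [Walk.isPath_def, hab.ne], rfl⟩
    have hbdd : BddAbove T := by
      refine ⟨ℓ, ?_⟩
      rintro k ⟨c, d, p, hp, rfl⟩
      have := hfree c d p hp; omega
    set L := sSup T with hLdef
    obtain ⟨x, y, p, hp, hplen⟩ := Nat.sSup_mem ⟨1, hT1⟩ hbdd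
    have hmax : ∀ k ∈ T, k ≤ L := fun k hk => le_csSup hbdd hk
    have hL1 : 1 ≤ L := hmax 1 hT1
    set s := p.support with hs
    have hnd : s.Nodup := hp.support_nodup
    have hchain : IsChain G.Adj s := p.isChain_adj_support
    have hslen : s.length = L + 1 := by rw [hs, p.length_support, hplen]
    have hsle : L + 1 ≤ ℓ - 1 := by have := hfree x y p hp; omega
    have hsne : s ≠ [] := p.support_ne_nil
    have hs0 : s.head hsne = x := p.head_support
    have hslast : s.getLast hsne = y := p.getLast_support
    have hs0' : s[0]'(by rw [hslen]; omega) = x := by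
      rw [← List.head_eq_getElem]; exact hs0
    have hslast' : s[L]'(by omega) = y := by
      have := List.getLast_eq_getElem hsne
      rw [hslast] at this
      simp only [hslen] at this ⊢
      simpa using this.symm
    have hclosure_u : ∀ w, G.Adj x w → w ∈ s := by
      intro w hw
      by_contra hws
      have hmem : p.length + 1 ∈ T :=
        ⟨w, y, Walk.cons hw.symm p, hp.cons (hs ▸ hws), by simp⟩
      have := hmax _ hmem; omega
    have hclosure_v : ∀ w, G.Adj y w → w ∈ s := by
      intro w hw
      by_contra hws
      have hmem : p.length + 1 ∈ T :=
        ⟨w, x, Walk.cons hw.symm p.reverse,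
          hp.reverse.cons (by rw [Walk.support_reverse]; simpa [hs] using hws), by simp⟩
      have := hmax _ hmem; omega
    have hinj : ∀ w1 ∈ s, ∀ w2 ∈ s, s.idxOf w1 = s.idxOf w2 → w1 = w2 := by
      intro w1 h1 w2 h2 h
      have e1 := List.getElem_idxOf (List.idxOf_lt_length_iff.2 h1)
      have e2 := List.getElem_idxOf (List.idxOf_lt_length_iff.2 h2)
      rw [← e1, ← e2]
      simp only [h]
    set A := (G.neighborFinset x).image (fun w => s.idxOf w) with hA
    set B := (G.neighborFinset y).image (fun w => s.idxOf w + 1) with hB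
    have hAsub : A ⊆ Finset.Ico 1 s.length := by
      intro i hi
      simp only [hA, Finset.mem_image] at hi
      obtain ⟨w, hw, rfl⟩ := hi
      rw [mem_neighborFinset] at hw
      have hmem := hclosure_u w hw
      have h1 : s.idxOf w < s.length := List.idxOf_lt_length_iff.2 hmem
      have h0 : s.idxOf w ≠ 0 := by
        intro h0
        have : s[s.idxOf w] = w := List.getElem_idxOf h1
        simp only [h0, hs0'] at this
        exact hw.ne this
      rw [Finset.mem_Ico]; omega
    have hBsub : B ⊆ Finset.Ico 1 s.length := by
      intro i hi
      simp only [hB, Finset.mem_image] at hi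
      obtain ⟨w, hw, rfl⟩ := hi
      rw [mem_neighborFinset] at hw
      have hmem := hclosure_v w hw
      have h1 : s.idxOf w < s.length := List.idxOf_lt_length_iff.2 hmem
      have h0 : s.idxOf w ≠ L := by
        intro h0
        have : s[s.idxOf w] = w := List.getElem_idxOf h1
        simp only [h0, hslast'] at this
        exact hw.ne this
      rw [Finset.mem_Ico]; omega
    have hcardA : A.card = G.degree x := by
      rw [hA, Finset.card_image_of_injOn, SimpleGraph.degree]
      intro w1 h1 w2 h2 h
      rw [Finset.mem_coe, mem_neighborFinset] at h1 h2
      exact hinj _ (hclosure_u _ h1) _ (hclosure_u _ h2) h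
    have hcardB : B.card = G.degree y := by
      rw [hB, Finset.card_image_of_injOn, SimpleGraph.degree]
      intro w1 h1 w2 h2 h
      simp only at h
      rw [Finset.mem_coe, mem_neighborFinset] at h1 h2
      exact hinj _ (hclosure_v _ h1) _ (hclosure_v _ h2) (by omega)
    have hxdeg : 0 < G.degree x := deg_pos_of_mem_support p (by omega) p.start_mem_support
    have hydeg : 0 < G.degree y := deg_pos_of_mem_support p (by omega) p.end_mem_support
    have hcross : (A ∩ B).Nonempty := by
      rw [← Finset.card_pos]
      have hu := Finset.card_union_add_card_inter A B
      have hsub := Finset.card_le_card (Finset.union_subset hAsub hBsub)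
      rw [Nat.card_Ico] at hsub
      have h1 := hbig x hxdeg
      have h2 := hbig y hydeg
      omega
    obtain ⟨i, hiAB⟩ := hcross
    rw [Finset.mem_inter] at hiAB
    obtain ⟨hiA, hiB⟩ := hiAB
    have hi1 : 1 ≤ i := (Finset.mem_Ico.1 (hAsub hiA)).1
    have hilt : i < s.length := (Finset.mem_Ico.1 (hAsub hiA)).2
    have hxi : G.Adj x (s[i]'hilt) := by
      simp only [hA, Finset.mem_image] at hiA
      obtain ⟨w, hw, rfl⟩ := hiA
      rw [mem_neighborFinset] at hw
      rwa [List.getElem_idxOf (List.idxOf_lt_length_iff.2 (hclosure_u w hw))]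
    have hyi : G.Adj y (s[i-1]'(by omega)) := by
      simp only [hB, Finset.mem_image] at hiB
      obtain ⟨w, hw, hwi⟩ := hiB
      rw [mem_neighborFinset] at hw
      have h1 : s.idxOf w < s.length := List.idxOf_lt_length_iff.2 (hclosure_v w hw)
      have hw1 : s.idxOf w = i - 1 := by omega
      have h2 : s[s.idxOf w] = w := List.getElem_idxOf h1
      simp only [hw1] at h2
      simp only [h2]
      exact hw
    -- the closure claim
    have hclosed : ∀ z ∈ s, ∀ w, G.Adj z w → w ∈ s := by
      intro z hzs w hzw
      by_contra hws
      set cyc := s.take i ++ (s.drop i).reverse with hcyc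
      have hperm : cyc ~ s := by
        rw [hcyc]
        refine (List.Perm.append_left _ (List.reverse_perm _)).trans ?_
        rw [List.take_append_drop]
      have hcyclen : cyc.length = s.length := hperm.length_eq
      have hcycne : cyc ≠ [] := by
        intro h
        rw [h] at hcyclen
        simp only [List.length_nil] at hcyclen
        omega
      have hdropne : (s.drop i).reverse ≠ [] := by
        intro h
        have := congrArg List.length h
        rw [List.length_reverse, List.length_drop, List.length_nil] at this
        omega
      have htakene : s.take i ≠ [] := by
        intro h
        have := congrArg List.length h
        rw [List.length_take, List.length_nil] at this
        omega
      have hcychain : IsChain G.Adj cyc := by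
        rw [hcyc, List.isChain_append]
        refine ⟨hchain.prefix (List.take_prefix _ _),
          (List.isChain_reverse).2 ((hchain.suffix (List.drop_suffix _ _)).imp
            fun a b h => h.symm), ?_⟩
        intro c hc d hd
        rw [List.getLast?_eq_getLast htakene, Option.mem_def, Option.some_inj] at hc
        rw [List.head?_eq_head hdropne, Option.mem_def, Option.some_inj] at hd
        have hct : (s.take i).getLast htakene = s[i-1]'(by omega) := by
          rw [List.getLast_eq_getElem]
          have hlt : i - 1 < (s.take i).length := by
            rw [List.length_take]; omega
          have : (s.take i).length - 1 = i - 1 := by rw [List.length_take]; omega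
          simp only [this]
          rw [List.getElem_take]
        have hdh : ((s.drop i).reverse).head hdropne = s[s.length - 1]'(by omega) := by
          rw [List.head_reverse, List.getLast_eq_getElem,
            ← List.getElem_drop' (xs := s) (i := i) (j := (s.drop i).length - 1)
              (by rw [List.length_drop]; omega)]
          congr 1
          rw [List.length_drop]
          omega
        rw [← hc, ← hd, hct, hdh]
        have : s[s.length - 1]'(by omega) = y := by
          simp only [hslen, show L + 1 - 1 = L from rfl]
          exact hslast'
        rw [this]
        exact hyi.symm
      have hcycwrap : G.Adj (cyc.getLast hcycne) (cyc.head hcycne) := by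
        have hcl : cyc.getLast hcycne = s[i]'hilt := by
          have h1 : cyc.getLast hcycne = ((s.drop i).reverse).getLast hdropne :=
            List.getLast_append_of_ne_nil _ hdropne
          rw [h1, List.getLast_reverse, List.head_eq_getElem,
            ← List.getElem_drop' (xs := s) (i := i) (j := 0) (by omega)]
          congr 1
        have hch : cyc.head hcycne = x := by
          have h1 : cyc.head hcycne = (s.take i).head htakene :=
            List.head_append_left htakene
          rw [h1, List.head_eq_getElem]
          simp only [List.getElem_take]
          exact hs0'
        rw [hcl, hch]
        exact hxi.symm
      have hzcyc : z ∈ cyc := hperm.mem_iff.2 hzs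
      set rot := cyc.rotate (cyc.idxOf z) with hrot
      have hrotperm : rot ~ cyc := cyc.rotate_perm _
      have hrotne : rot ≠ [] := by
        intro h
        have := hrotperm.length_eq
        rw [h] at this; simp at this; omega
      have hrothead : rot.head hrotne = z := head_rotate_indexOf hzcyc hrotne
      have hrotchain : IsChain G.Adj rot := chain'_rotate_of_cyclic hcycne hcychain hcycwrap _
      have hrotnd : rot.Nodup := hrotperm.nodup_iff.2 (hperm.nodup_iff.2 hnd)
      have hnewchain : IsChain G.Adj (w :: rot) := by
        rw [List.isChain_cons]
        refine ⟨?_, hrotchain⟩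
        intro q hq
        rw [List.head?_eq_head hrotne, Option.mem_def, Option.some_inj] at hq
        rw [← hq, hrothead]
        exact hzw.symm
      have hnewnd : (w :: rot).Nodup := by
        rw [List.nodup_cons]
        refine ⟨fun hmem => hws (hperm.mem_iff.1 (hrotperm.mem_iff.1 hmem)), hrotnd⟩
      obtain ⟨q, hq⟩ := walkOfChain (w :: rot) (List.cons_ne_nil _ _) hnewchain
      have hqpath : q.IsPath := by rw [Walk.isPath_def, hq]; exact hnewnd
      have hqlen : q.length = L + 1 := by
        have := q.length_support
        rw [hq] at this
        simp only [List.length_cons] at this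
        have h2 := hrotperm.length_eq
        omega
      have := hmax q.length ⟨_, _, q, hqpath, rfl⟩
      omega
    -- counting
    refine ⟨s.toFinset, ⟨x, by rw [List.mem_toFinset]; exact hs ▸ p.start_mem_support⟩,
      fun z hz => deg_pos_of_mem_support p (by omega) (by rwa [← List.mem_toFinset, ← hs]), ?_⟩
    set G2 : SimpleGraph V :=
      { Adj := fun c d => G.Adj c d ∧ c ∈ s ∧ d ∈ s,
        symm := ⟨fun c d h => ⟨h.1.symm, h.2.2, h.2.1⟩⟩,
        loopless := ⟨fun c h => G.loopless.irrefl c h.1⟩ } with hG2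
    haveI : DecidableRel G2.Adj := fun c d =>
      inferInstanceAs (Decidable (G.Adj c d ∧ c ∈ s ∧ d ∈ s))
    have hedges : G.edgeFinset.filter (fun e => ∃ x' ∈ s.toFinset, x' ∈ e) = G2.edgeFinset := by
      ext e
      induction e using Sym2.ind with
      | _ c d =>
        simp only [Finset.mem_filter, mem_edgeFinset, mem_edgeSet, List.mem_toFinset, hG2]
        constructor
        · rintro ⟨hcd, x', hx', hmem⟩
          rw [Sym2.mem_iff] at hmem
          rcases hmem with rfl | rfl
          · exact ⟨hcd, hx', hclosed _ hx' _ hcd⟩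
          · exact ⟨hcd, hclosed _ hx' _ hcd.symm, hx'⟩
        · rintro ⟨hcd, hc, hd⟩
          exact ⟨hcd, c, hc, Sym2.mem_mk_left _ _⟩
    rw [hedges, ← G2.sum_degrees_eq_twice_card_edges]
    have hvanish : ∀ c ∈ Finset.univ, c ∉ s.toFinset → G2.degree c = 0 := by
      intro c _ hc
      rw [List.mem_toFinset] at hc
      rw [← Finset.card_eq_zero.2]
      rfl
      ext d
      simp only [mem_neighborFinset, hG2, Finset.notMem_empty, iff_false]
      rintro ⟨-, hcs, -⟩
      exact hc hcs
    rw [← Finset.sum_subset (Finset.subset_univ s.toFinset) hvanish]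
    have hdegle : ∀ c ∈ s.toFinset, G2.degree c ≤ ℓ - 2 := by
      intro c hc
      rw [List.mem_toFinset] at hc
      have hsub2 : G2.neighborFinset c ⊆ s.toFinset.erase c := by
        intro d hd
        rw [mem_neighborFinset] at hd
        rw [Finset.mem_erase, List.mem_toFinset]
        exact ⟨fun h => G2.loopless.irrefl c (h ▸ hd), hd.2.2⟩
      have := Finset.card_le_card hsub2
      rw [Finset.card_erase_of_mem (List.mem_toFinset.2 hc),
        List.toFinset_card_of_nodup hnd] at this
      rw [SimpleGraph.degree]
      omega
    calc ∑ c ∈ s.toFinset, G2.degree c ≤ ∑ c ∈ s.toFinset, (ℓ - 2) :=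
          Finset.sum_le_sum hdegle
      _ = (ℓ - 2) * s.toFinset.card := by rw [Finset.sum_const, smul_eq_mul, Nat.mul_comm]

lemma EG_aux (ℓ : ℕ) (hℓ : 3 ≤ ℓ) :
    ∀ (k : ℕ) (G : SimpleGraph V) [DecidableRel G.Adj], G.edgeFinset.card = k →
      (∀ (u v : V) (p : G.Walk u v), p.IsPath → p.length + 2 ≤ ℓ) →
      2 * G.edgeFinset.card ≤ (ℓ - 2) * (Finset.univ.filter (fun v => 0 < G.degree v)).card := by
  intro k
  induction k using Nat.strong_induction_on with
  | _ k ih =>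
    intro G instG hk hfree
    rcases Finset.eq_empty_or_nonempty G.edgeFinset with he | hne
    · rw [he]; simp
    · obtain ⟨S, hSne, hSdeg, hScount⟩ := goodS ℓ hℓ G hfree hne
      set E1 := G.edgeFinset.filter (fun e => ∃ x ∈ S, x ∈ e) with hE1
      set G' := G.deleteEdges ↑E1 with hG'
      haveI instG' : DecidableRel G'.Adj := fun c d =>
        decidable_of_iff (G.Adj c d ∧ s(c, d) ∉ E1)
          (by rw [hG', SimpleGraph.deleteEdges_adj, Finset.mem_coe])
      have hE1sub : E1 ⊆ G.edgeFinset := Finset.filter_subset _ _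
      have hedge' : G'.edgeFinset = G.edgeFinset \ E1 := by
        ext e
        rw [mem_edgeFinset, hG', SimpleGraph.edgeSet_deleteEdges, Set.mem_diff,
          Finset.mem_sdiff, mem_edgeFinset, Finset.mem_coe]
      have hcard' : G'.edgeFinset.card = G.edgeFinset.card - E1.card := by
        rw [hedge', Finset.card_sdiff_of_subset hE1sub]
      have hE1pos : 0 < E1.card := by
        obtain ⟨v, hv⟩ := hSne
        obtain ⟨w, hw⟩ := (G.degree_pos_iff_exists_adj v).1 (hSdeg v hv)
        refine Finset.card_pos.2 ⟨s(v, w), ?_⟩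
        rw [hE1, Finset.mem_filter, mem_edgeFinset]
        exact ⟨hw, v, hv, Sym2.mem_mk_left _ _⟩
      have hfree' : ∀ (u v : V) (p : G'.Walk u v), p.IsPath → p.length + 2 ≤ ℓ := by
        intro u v q hq
        have := hfree u v (q.mapLe (G.deleteEdges_le ↑E1)) (hq.mapLe _)
        rwa [Walk.mapLe, Walk.length_map] at this
      have hsub' : Finset.univ.filter (fun v => 0 < G'.degree v) ⊆
          (Finset.univ.filter (fun v => 0 < G.degree v)) \ S := by
        intro v hv
        rw [Finset.mem_filter] at hv
        obtain ⟨w, hw⟩ := (G'.degree_pos_iff_exists_adj v).1 hv.2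
        rw [hG', SimpleGraph.deleteEdges_adj] at hw
        rw [Finset.mem_sdiff, Finset.mem_filter]
        refine ⟨⟨Finset.mem_univ _, (G.degree_pos_iff_exists_adj v).2 ⟨w, hw.1⟩⟩, ?_⟩
        intro hvS
        exact hw.2 (by
          rw [Finset.mem_coe, hE1, Finset.mem_filter, mem_edgeFinset]
          exact ⟨hw.1, v, hvS, Sym2.mem_mk_left _ _⟩)
      have hSsub : S ⊆ Finset.univ.filter (fun v => 0 < G.degree v) := by
        intro v hv
        rw [Finset.mem_filter]
        exact ⟨Finset.mem_univ _, hSdeg v hv⟩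
      have hcards : (Finset.univ.filter (fun v => 0 < G'.degree v)).card + S.card ≤
          (Finset.univ.filter (fun v => 0 < G.degree v)).card := by
        have h1 := Finset.card_le_card hsub'
        rw [Finset.card_sdiff_of_subset hSsub] at h1
        have h2 := Finset.card_le_card hSsub
        omega
      have hE1le := Finset.card_le_card hE1sub
      have hih := ih (G'.edgeFinset.card) (by omega) G' rfl hfree'
      calc 2 * G.edgeFinset.card = 2 * G'.edgeFinset.card + 2 * E1.card := by omega
        _ ≤ (ℓ - 2) * (Finset.univ.filter (fun v => 0 < G'.degree v)).card
              + (ℓ - 2) * S.card := Nat.add_le_add hih hScount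
        _ = (ℓ - 2) * ((Finset.univ.filter (fun v => 0 < G'.degree v)).card + S.card) := by
              rw [Nat.mul_add]
        _ ≤ (ℓ - 2) * (Finset.univ.filter (fun v => 0 < G.degree v)).card :=
              Nat.mul_le_mul_left _ hcards

lemma EG (ℓ : ℕ) (hℓ : 3 ≤ ℓ) (G : SimpleGraph V) [DecidableRel G.Adj]
    (hfree : ∀ (u v : V) (p : G.Walk u v), p.IsPath → p.length + 2 ≤ ℓ) :
    2 * G.edgeFinset.card ≤ (ℓ - 2) * Fintype.card V :=
  le_trans (EG_aux ℓ hℓ G.edgeFinset.card G rfl hfree)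
    (Nat.mul_le_mul_left _ (by exact (Finset.card_le_card (Finset.filter_subset _ _)).trans_eq Finset.card_univ))

end Graphs

section Part2
variable {V : Type*}

lemma free_of_no_copy (G : SimpleGraph V) (ℓ : ℕ) (h : ¬ HasCopy (pathGraph ℓ) G) :
    ∀ (u v : V) (p : G.Walk u v), p.IsPath → p.length + 2 ≤ ℓ := by
  intro u v p hp
  by_contra hlen
  push_neg at hlen
  apply h
  set s := p.support with hs
  set l := s.take ℓ with hl
  have hsl : s.length = p.length + 1 := p.length_support
  have hllen : l.length = ℓ := by rw [hl, List.length_take]; omega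
  have hnd : l.Nodup := hp.support_nodup.sublist (List.take_sublist _ _)
  have hchain : IsChain G.Adj l := p.isChain_adj_support.prefix (List.take_prefix _ _)
  rw [List.isChain_iff_getElem] at hchain
  refine ⟨⟨fun i => l[(i : ℕ)]'(by omega), ?_⟩, ?_⟩
  · intro i j hij
    rw [pathGraph_adj] at hij
    rcases hij with h1 | h1
    · have h2 := hchain (i : ℕ) (by omega)
      simp only [h1] at h2
      exact h2
    · have h2 := hchain (j : ℕ) (by omega)
      simp only [h1] at h2
      exact h2.symm
  · intro i j hij
    have h2 := List.nodup_iff_injective_getElem.1 hnd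
      (a₁ := ⟨(i : ℕ), by omega⟩) (a₂ := ⟨(j : ℕ), by omega⟩) (by exact hij)
    exact Fin.ext (by simpa using congrArg Fin.val h2)

lemma bot_free (ℓ n : ℕ) (hℓ : 2 ≤ ℓ) : ¬ HasCopy (pathGraph ℓ) (⊥ : SimpleGraph (Fin n)) := by
  rintro ⟨f, -⟩
  have hadj : (pathGraph ℓ).Adj ⟨0, by omega⟩ ⟨1, by omega⟩ := by
    rw [pathGraph_adj]; left; rfl
  simpa using f.map_rel hadj

lemma exNum_bddAbove (n : ℕ) {W : Type*} (H : SimpleGraph W) :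
    BddAbove {m | ∃ G : SimpleGraph (Fin n), ¬ HasCopy H G ∧ m = G.edgeSet.ncard} := by
  refine ⟨Nat.card (Sym2 (Fin n)), ?_⟩
  rintro m ⟨G, -, rfl⟩
  rw [← Set.ncard_univ]
  exact Set.ncard_le_ncard (Set.subset_univ _) (Set.toFinite _)

lemma exNum_mem (ℓ n : ℕ) (hℓ : 2 ≤ ℓ) :
    ∃ G : SimpleGraph (Fin n), ¬ HasCopy (pathGraph ℓ) G ∧
      exNum n (pathGraph ℓ) = G.edgeSet.ncard := by
  have := Nat.sSup_mem
    (s := {m | ∃ G : SimpleGraph (Fin n), ¬ HasCopy (pathGraph ℓ) G ∧ m = G.edgeSet.ncard})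
    ⟨0, ⊥, bot_free ℓ n hℓ, by simp⟩ (exNum_bddAbove n _)
  exact this

end Part2

def blocksG (m d : ℕ) : SimpleGraph (Fin m) where
  Adj x y := x ≠ y ∧ x.val / d = y.val / d
  symm := ⟨fun x y h => ⟨h.1.symm, h.2.symm⟩⟩
  loopless := ⟨fun x h => h.1 rfl⟩

instance (m d : ℕ) : DecidableRel (blocksG m d).Adj := fun x y =>
  inferInstanceAs (Decidable (x ≠ y ∧ x.val / d = y.val / d))

lemma blocksG_free (m d ℓ : ℕ) (hd : 0 < d) (hdl : d < ℓ) :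
    ¬ HasCopy (pathGraph ℓ) (blocksG m d) := by
  rintro ⟨f, hinj⟩
  have hℓ0 : 0 < ℓ := by omega
  have hconst : ∀ (j : ℕ) (hj : j < ℓ),
      (f ⟨j, hj⟩).val / d = (f ⟨0, hℓ0⟩).val / d := by
    intro j
    induction j with
    | zero => intro hj; rfl
    | succ j ihj =>
      intro hj
      have hadj : (pathGraph ℓ).Adj ⟨j, by omega⟩ ⟨j + 1, hj⟩ := by
        rw [pathGraph_adj]; left; rfl
      have h2 := f.map_rel hadj
      rw [← h2.2]
      exact ihj (by omega)
  set g : Fin ℓ → Fin d := fun i => ⟨(f i).val % d, Nat.mod_lt _ hd⟩ with hg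
  have hginj : Function.Injective g := by
    intro i j hij
    apply hinj
    have h1 := hconst i.val i.isLt
    have h2 := hconst j.val j.isLt
    have hm : (f i).val % d = (f j).val % d := congrArg Fin.val hij
    refine Fin.ext ?_
    calc (f i).val = d * ((f i).val / d) + (f i).val % d := (Nat.div_add_mod _ _).symm
      _ = d * ((f j).val / d) + (f j).val % d := by
          rw [show f i = f ⟨i.val, i.isLt⟩ from rfl] at h1 ⊢ <;> skip
          rw [show (f i).val / d = (f ⟨(i:ℕ), i.isLt⟩).val / d from rfl, h1,
            show (f j).val / d = (f ⟨(j:ℕ), j.isLt⟩).val / d from rfl, h2, hm]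
      _ = (f j).val := Nat.div_add_mod _ _
  have hcard := Fintype.card_le_of_injective g hginj
  simp only [Fintype.card_fin] at hcard
  omega

lemma blocksG_count (m d : ℕ) (hd : 0 < d) :
    2 * (blocksG m d).edgeSet.ncard + (m % d) * (d - m % d) = (d - 1) * m := by
  classical
  have hblock : ∀ x : Fin m,
      (Finset.univ.filter (fun y : Fin m => y.val / d = x.val / d)).card
        = if x.val < (m / d) * d then d else m % d := by
    intro x
    set k := x.val / d with hk
    have hcard : (Finset.univ.filter (fun y : Fin m => y.val / d = k)).card
        = ((Finset.range m).filter (fun y => y / d = k)).card := by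
      refine Finset.card_bij (fun y _ => y.val) ?_ ?_ ?_
      · intro y hy
        rw [Finset.mem_filter] at hy
        rw [Finset.mem_filter, Finset.mem_range]
        exact ⟨y.isLt, hy.2⟩
      · intro y1 _ y2 _ h
        exact Fin.ext h
      · intro z hz
        rw [Finset.mem_filter, Finset.mem_range] at hz
        exact ⟨⟨z, hz.1⟩, Finset.mem_filter.2 ⟨Finset.mem_univ _, hz.2⟩, rfl⟩
    have hico : (Finset.range m).filter (fun y => y / d = k)
        = Finset.Ico (k * d) (min ((k + 1) * d) m) := by
      ext z
      rw [Finset.mem_filter, Finset.mem_range, Finset.mem_Ico]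
      have hzc : d * (z / d) = z / d * d := Nat.mul_comm _ _
      have hzm := Nat.div_add_mod z d
      have hzlt : z % d < d := Nat.mod_lt z hd
      have hdiv : z / d = k ↔ k * d ≤ z ∧ z < (k + 1) * d := by
        constructor
        · intro h
          rw [← h]
          have hsucc : (z / d + 1) * d = z / d * d + d := by ring
          exact ⟨Nat.div_mul_le_self z d, by omega⟩
        · rintro ⟨h1, h2⟩
          have ha : k ≤ z / d := (Nat.le_div_iff_mul_le hd).2 h1
          have hb : z / d < k + 1 := (Nat.div_lt_iff_lt_mul hd).2 h2
          omega
      rw [hdiv]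
      have hsucc : (k + 1) * d = k * d + d := by ring
      omega
    rw [hcard, hico, Nat.card_Ico]
    rcases Nat.lt_or_ge x.val ((m / d) * d) with hx | hx
    · have hklt : k < m / d := (Nat.div_lt_iff_lt_mul hd).2 hx
      have h1 : (k + 1) * d ≤ m := by
        calc (k + 1) * d ≤ (m / d) * d := Nat.mul_le_mul_right d (by omega)
          _ ≤ m := Nat.div_mul_le_self m d
      rw [if_pos hx, min_eq_left h1]
      have hsucc : (k + 1) * d = k * d + d := by ring
      omega
    · have hge : m / d ≤ k := (Nat.le_div_iff_mul_le hd).2 hx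
      have hle : k ≤ m / d := Nat.div_le_div_right x.isLt.le
      have hkeq : k = m / d := le_antisymm hle hge
      have hmod := Nat.div_add_mod m d
      have hcm : d * (m / d) = m / d * d := Nat.mul_comm _ _
      have hmlt : m < (k + 1) * d := by
        have hsucc : (k + 1) * d = k * d + d := by ring
        have := Nat.mod_lt m hd
        rw [hkeq] at hsucc ⊢
        omega
      rw [if_neg (by omega), min_eq_right hmlt.le, hkeq]
      omega
  have hdeg : ∀ x : Fin m, (blocksG m d).degree x
      = (if x.val < (m / d) * d then d else m % d) - 1 := by
    intro x
    have hnb : (blocksG m d).neighborFinset x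
        = (Finset.univ.filter (fun y : Fin m => y.val / d = x.val / d)).erase x := by
      ext y
      rw [mem_neighborFinset, Finset.mem_erase, Finset.mem_filter]
      constructor
      · rintro ⟨h1, h2⟩
        exact ⟨fun h => h1 (h ▸ rfl), Finset.mem_univ _, h2.symm⟩
      · rintro ⟨h1, -, h2⟩
        exact ⟨fun h => h1 (h ▸ rfl), h2.symm⟩
    have hxmem : x ∈ Finset.univ.filter (fun y : Fin m => y.val / d = x.val / d) :=
      Finset.mem_filter.2 ⟨Finset.mem_univ _, rfl⟩
    rw [SimpleGraph.degree, hnb, Finset.card_erase_of_mem hxmem, hblock]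
  have hhs := (blocksG m d).sum_degrees_eq_twice_card_edges
  have hn : (blocksG m d).edgeSet.ncard = (blocksG m d).edgeFinset.card := by
    rw [← SimpleGraph.coe_edgeFinset, Set.ncard_coe_finset]
  have hstep : (∑ v : Fin m, (blocksG m d).degree v)
      = ∑ i ∈ Finset.range m, ((if i < (m / d) * d then d else m % d) - 1) := by
    rw [Finset.sum_congr rfl (fun x (_ : x ∈ Finset.univ) => hdeg x)]
    exact Fin.sum_univ_eq_sum_range (fun i => (if i < (m / d) * d then d else m % d) - 1) m
  have hadle : (m / d) * d ≤ m := Nat.div_mul_le_self m d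
  have hsum1 : ∑ i ∈ Finset.Ico 0 ((m / d) * d), ((if i < (m / d) * d then d else m % d) - 1)
      = (m / d) * d * (d - 1) := by
    have h1 : ∀ i ∈ Finset.Ico 0 ((m / d) * d),
        ((if i < (m / d) * d then d else m % d) - 1) = d - 1 := by
      intro i hi
      rw [Finset.mem_Ico] at hi
      rw [if_pos hi.2]
    rw [Finset.sum_congr rfl h1, Finset.sum_const, Nat.card_Ico, smul_eq_mul, Nat.sub_zero]
  have hsum2 : ∑ i ∈ Finset.Ico ((m / d) * d) m, ((if i < (m / d) * d then d else m % d) - 1)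
      = (m % d) * (m % d - 1) := by
    have h1 : ∀ i ∈ Finset.Ico ((m / d) * d) m,
        ((if i < (m / d) * d then d else m % d) - 1) = m % d - 1 := by
      intro i hi
      rw [Finset.mem_Ico] at hi
      rw [if_neg (by omega)]
    rw [Finset.sum_congr rfl h1, Finset.sum_const, Nat.card_Ico, smul_eq_mul]
    have hmod := Nat.div_add_mod m d
    have hcm : d * (m / d) = m / d * d := Nat.mul_comm _ _
    congr 1
    omega
  rw [hn, ← hhs, hstep, Finset.range_eq_Ico,
    ← Finset.sum_Ico_consecutive _ (Nat.zero_le ((m / d) * d)) hadle, hsum1, hsum2]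
  have hmod := Nat.div_add_mod m d
  have hcm : d * (m / d) = m / d * d := Nat.mul_comm _ _
  have hblt : m % d < d := Nat.mod_lt m hd
  rcases Nat.eq_zero_or_pos (m % d) with hb0 | hb1
  · rw [hb0]
    have hmm : m / d * d = m := by omega
    simp only [Nat.zero_mul, Nat.mul_zero, Nat.sub_zero, Nat.add_zero, Nat.mul_zero]
    rw [hmm, Nat.mul_comm]
  · have hmz : ((d * (m / d) + m % d : ℕ) : ℤ) = (m : ℤ) := by exact_mod_cast hmod
    push_cast at hmz
    zify [hb1, hblt.le, hd]
    linear_combination ((d : ℤ) - 1) * hmz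


lemma exNum_upper (ℓ n : ℕ) (hℓ : 3 ≤ ℓ) : 2 * exNum n (pathGraph ℓ) ≤ (ℓ - 2) * n := by
  obtain ⟨G, hfree, hcard⟩ := exNum_mem ℓ n (by omega)
  classical
  rw [hcard]
  rw [← G.coe_edgeFinset, Set.ncard_coe_finset]
  have := EG ℓ hℓ G (free_of_no_copy G ℓ hfree)
  simpa [Fintype.card_fin] using this

lemma exNum_lower (ℓ n : ℕ) (hℓ : 4 ≤ ℓ) :
    (ℓ - 2) * n ≤ 2 * exNum n (pathGraph ℓ) + (n % (ℓ - 1)) * ((ℓ - 1) - n % (ℓ - 1)) := by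
  have hd : 0 < ℓ - 1 := by omega
  have hfree := blocksG_free n (ℓ - 1) ℓ hd (by omega)
  have hle : (blocksG n (ℓ - 1)).edgeSet.ncard ≤ exNum n (pathGraph ℓ) :=
    le_csSup (exNum_bddAbove n _) ⟨blocksG n (ℓ - 1), hfree, rfl⟩
  have hcount := blocksG_count n (ℓ - 1) hd
  have hdd : (ℓ - 1) - 1 = ℓ - 2 := by omega
  rw [hdd] at hcount
  linarith

end EGProof

/-- For `ℓ ≥ 4` and nonnegative integers `n₁, n₂, c` with `c ≤ n₁`,
`ex(n₁, P_ℓ) + ex(n₂, P_ℓ) < ex(n₁ - c, P_ℓ) + ex(n₂ + c + ℓ, P_ℓ)`. -/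
theorem ex_path_shift_lt (ℓ n₁ n₂ c : ℕ) (hℓ : 4 ≤ ℓ) (hc : c ≤ n₁) :
    exNum n₁ (pathGraph ℓ) + exNum n₂ (pathGraph ℓ) <
      exNum (n₁ - c) (pathGraph ℓ) + exNum (n₂ + c + ℓ) (pathGraph ℓ) := by
  have hu1 := exNum_upper ℓ n₁ (by omega)
  have hu2 := exNum_upper ℓ n₂ (by omega)
  have hl1 := exNum_lower ℓ (n₁ - c) hℓ
  have hl2 := exNum_lower ℓ (n₂ + c + ℓ) hℓ
  set d := ℓ - 1 with hdd
  set b₁ := (n₁ - c) % d with hb1d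
  set b₂ := (n₂ + c + ℓ) % d with hb2d
  have hd3 : 3 ≤ d := by omega
  have hb₁ : b₁ < d := Nat.mod_lt _ (by omega)
  have hb₂ : b₂ < d := Nat.mod_lt _ (by omega)
  have key : b₁ * (d - b₁) + b₂ * (d - b₂) < (ℓ - 2) * ℓ := by
    have hld : ℓ = d + 1 := by omega
    have hl2' : ℓ - 2 = d - 1 := by omega
    rw [hl2', hld]
    zify [hb₁.le, hb₂.le, (show 1 ≤ d by omega)]
    nlinarith [sq_nonneg ((d : ℤ) - 2 * b₁), sq_nonneg ((d : ℤ) - 2 * b₂)]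
  have hexp0 : (n₁ - c) + (n₂ + c + ℓ) = n₁ + n₂ + ℓ := by omega
  have he1 : (ℓ - 2) * (n₁ - c) + (ℓ - 2) * (n₂ + c + ℓ) = (ℓ - 2) * (n₁ + n₂ + ℓ) := by
    rw [← Nat.mul_add, hexp0]
  have he2 : (ℓ - 2) * (n₁ + n₂ + ℓ) = (ℓ - 2) * n₁ + (ℓ - 2) * n₂ + (ℓ - 2) * ℓ := by ring
  linarith
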